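/- For every finite partition of ℕ into r cells, some cell contains FS(⟨x_n⟩) for an injective sequence ⟨x_n⟩ of positive integers (Hindman's finite sums theorem), and moreover the same cell contains FS of every sum subsystem obtained by taking y_n = ∑_{t ∈ H_n} x_t for a sequence of finite sets with max H_n < min H_{n+1}. -/

import Mathlib

open Set

def Thick (A : Set ℕ) : Prop :=
  ∀ F : Finset ℕ, ∃ x : ℕ, ∀ f ∈ F, f + x ∈ A

def PiecewiseSyndetic (A : Set ℕ) : Prop :=
  ∃ F : Finset ℕ, Thick (⋃ t ∈ F, {y : ℕ | t + y ∈ A})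

def Syndetic (A : Set ℕ) : Prop :=
  ∃ F : Finset ℕ, ∀ n : ℕ, ∃ t ∈ F, t + n ∈ A

def FS (x : ℕ → ℕ) : Set ℕ :=
  {n : ℕ | ∃ H : Finset ℕ, H.Nonempty ∧ n = ∑ t ∈ H, x t}

def IPSet (A : Set ℕ) : Prop :=
  ∃ x : ℕ → ℕ, Function.Injective x ∧ FS x ⊆ A

def IPStar (A : Set ℕ) : Prop :=
  ∀ B : Set ℕ, IPSet B → (A ∩ B).Nonempty

/-- Image of Hindman's FS under a semigroup hom is contained in FS of the mapped stream,
stated in the reverse direction we need. -/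
lemma FS_map_rev {M N : Type*} [AddSemigroup M] [AddSemigroup N] (f : M → N)
    (hf : ∀ x y, f (x + y) = f x + f y) :
    ∀ b : Stream' N, ∀ m ∈ Hindman.FS b, ∀ a : Stream' M, b = a.map f →
      ∃ m' ∈ Hindman.FS a, f m' = m := by
  intro b m h
  induction h with
  | head' b =>
    intro a hb
    subst hb
    exact ⟨a.head, Hindman.FS.head a, (Stream'.head_map f a).symm⟩
  | tail' b m h ih =>
    intro a hb
    subst hb
    obtain ⟨m', hm', rfl⟩ := ih a.tail (Stream'.tail_map f a)
    exact ⟨m', Hindman.FS.tail a m' hm', rfl⟩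
  | cons' b m h ih =>
    intro a hb
    subst hb
    obtain ⟨m', hm', rfl⟩ := ih a.tail (Stream'.tail_map f a)
    exact ⟨a.head + m', Hindman.FS.cons a m' hm',
      by rw [hf, Stream'.head_map]⟩

/-- Indices in earlier blocks are smaller than indices in all later blocks. -/
lemma blocks_lt (H : ℕ → Finset ℕ) (hne : ∀ n, (H n).Nonempty)
    (hlt : ∀ n, ∀ a ∈ H n, ∀ b ∈ H (n + 1), a < b) :
    ∀ d n, ∀ a ∈ H n, ∀ b ∈ H (n + d + 1), a < b := by
  intro d
  induction d with
  | zero => exact fun n a ha b hb => hlt n a ha b hb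
  | succ d ih =>
    intro n a ha b hb
    obtain ⟨c, hc⟩ := hne (n + d + 1)
    exact (ih n a ha c hc).trans (hlt (n + d + 1) c hc b hb)

/-- FS of a sum-subsystem is contained in FS of the original sequence. -/
lemma FS_blocks_subset (x : ℕ → ℕ) (H : ℕ → Finset ℕ) (hne : ∀ n, (H n).Nonempty)
    (hlt : ∀ n, ∀ a ∈ H n, ∀ b ∈ H (n + 1), a < b) :
    FS (fun n => ∑ t ∈ H n, x t) ⊆ FS x := by
  have key : ∀ n m, n < m → ∀ a ∈ H n, ∀ b ∈ H m, a < b := by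
    intro n m hnm a ha b hb
    obtain ⟨d, rfl⟩ := Nat.exists_eq_add_of_lt hnm
    exact blocks_lt H hne hlt d n a ha b hb
  rintro s ⟨K, hK, rfl⟩
  refine ⟨K.biUnion H, ?_, ?_⟩
  · obtain ⟨k, hk⟩ := hK
    obtain ⟨c, hc⟩ := hne k
    exact ⟨c, Finset.mem_biUnion.mpr ⟨k, hk, hc⟩⟩
  · rw [Finset.sum_biUnion]
    intro n _ m _ hnm
    rcases lt_or_gt_of_ne hnm with h | h
    · exact Finset.disjoint_left.mpr fun a ha hb => lt_irrefl a (key n m h a ha a hb)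
    · exact Finset.disjoint_left.mpr fun a ha hb => lt_irrefl a (key m n h a hb a ha)

theorem hindman_with_sum_subsystems (r : ℕ) (C : ℕ → Fin r) :
    ∃ (i : Fin r) (x : ℕ → ℕ), Function.Injective x ∧ (∀ n, 0 < x n) ∧
      FS x ⊆ {n : ℕ | C n = i} ∧
      ∀ H : ℕ → Finset ℕ, (∀ n, (H n).Nonempty) →
        (∀ n, ∀ a ∈ H n, ∀ b ∈ H (n + 1), a < b) →
        FS (fun n => ∑ t ∈ H n, x t) ⊆ {n : ℕ | C n = i} := by
  -- Hindman's theorem over ℕ+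
  have hcov : (⊤ : Set ℕ+) ⊆ ⋃₀ Set.range (fun i : Fin r => {p : ℕ+ | C (p : ℕ) = i}) := by
    intro p _
    exact ⟨{q : ℕ+ | C (q : ℕ) = C (p : ℕ)}, ⟨C (p : ℕ), rfl⟩, rfl⟩
  obtain ⟨c, ⟨i, rfl⟩, a, hFSa⟩ :=
    Hindman.exists_FS_of_finite_cover _ (Set.finite_range _) hcov
  -- the ℕ-valued sequence
  set A : ℕ → ℕ := fun n => ((a.get n : ℕ+) : ℕ) with hA
  have hApos : ∀ t, 1 ≤ A t := fun t => (a.get t).pos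
  -- any finite sum of A's lands in the cell
  have natSum : ∀ K : Finset ℕ, K.Nonempty → C (∑ t ∈ K, A t) = i := by
    intro K hK
    have h1 : (∑ t ∈ K, (a.map (fun p : ℕ+ => (p : ℕ))).get t) ∈
        Hindman.FS (a.map (fun p : ℕ+ => (p : ℕ))) :=
      Hindman.FS.finset_sum _ K hK
    obtain ⟨m, hm, hm2⟩ := FS_map_rev (fun p : ℕ+ => (p : ℕ))
      (fun x y => PNat.add_coe x y) _ _ h1 a rfl
    have : C (m : ℕ) = i := hFSa hm
    have hsum : (m : ℕ) = ∑ t ∈ K, A t := by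
      rw [hm2]
      exact Finset.sum_congr rfl fun t _ => Stream'.get_map _ _ _
    rwa [hsum] at this
  -- hence FS A ⊆ cell
  have hFSA : FS A ⊆ {n : ℕ | C n = i} := by
    rintro s ⟨K, hK, rfl⟩
    exact natSum K hK
  -- block boundaries
  let e : ℕ → ℕ := fun n => Nat.rec 0 (fun k ek => ek + 1 + ∑ t ∈ Finset.range ek, A t) n
  have he : ∀ n, e (n + 1) = e n + 1 + ∑ t ∈ Finset.range (e n), A t := fun n => rfl
  have heLt : ∀ n, e n < e (n + 1) := by
    intro n; rw [he]; omega
  set x : ℕ → ℕ := fun n => ∑ t ∈ Finset.Ico (e n) (e (n + 1)), A t with hx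
  have hblne : ∀ n, (Finset.Ico (e n) (e (n + 1))).Nonempty :=
    fun n => Finset.nonempty_Ico.mpr (heLt n)
  have hbllt : ∀ n, ∀ p ∈ Finset.Ico (e n) (e (n + 1)),
      ∀ q ∈ Finset.Ico (e (n + 1)) (e (n + 2)), p < q := by
    intro n p hp q hq
    rw [Finset.mem_Ico] at hp hq
    omega
  have hxlb : ∀ n, e (n + 1) - e n ≤ x n := by
    intro n
    calc e (n + 1) - e n = (Finset.Ico (e n) (e (n + 1))).card • 1 := by
          rw [Nat.card_Ico, smul_eq_mul, mul_one]
      _ ≤ ∑ t ∈ Finset.Ico (e n) (e (n + 1)), A t :=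
          Finset.card_nsmul_le_sum _ _ _ (fun t _ => hApos t)
  have hxpos : ∀ n, 0 < x n := by
    intro n
    have h1 := hxlb n
    have h2 := heLt n
    omega
  have hxub : ∀ n, x n ≤ ∑ t ∈ Finset.range (e (n + 1)), A t := by
    intro n
    exact Finset.sum_le_sum_of_subset (by
      intro t ht
      rw [Finset.mem_Ico] at ht
      rw [Finset.mem_range]
      exact ht.2)
  have hmono : StrictMono x := strictMono_nat_of_lt_succ (by
    intro n
    have h1 := hxlb (n + 1)
    have h2 := hxub n
    rw [he (n + 1)] at h1
    omega)
  have hFSx : FS x ⊆ {n : ℕ | C n = i} :=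
    fun s hs => hFSA (FS_blocks_subset A _ hblne hbllt hs)
  refine ⟨i, x, hmono.injective, hxpos, hFSx, ?_⟩
  intro H hne hlt s hs
  exact hFSx (FS_blocks_subset x H hne hlt hs)
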